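/- Let D(x) = K(x) = (4x³ + x¹⁵)/5, so that d = k = D'(1) = 27/5, and define Φ(α) = D(1 - K'(α)/k) + (d/k)(K(α) + (1-α)K'(α) - 1). Then Φ(0) = 0, Φ(1) = 0, but there exists α ∈ (0,1) with Φ(α) > 0. -/
import Mathlib


/-- Lelarge's counterexample (Example 1.6): for `D = K = (4x³ + x¹⁵)/5` (so
`d = k = 27/5`), the rank functional `Φ` vanishes at `0` and `1` but is strictly
positive somewhere in `(0,1)`. -/
theorem stmt_6
    (D K : ℝ → ℝ)
    (hD : ∀ x, D x = (4 * x ^ 3 + x ^ 15) / 5)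
    (hK : ∀ x, K x = (4 * x ^ 3 + x ^ 15) / 5)
    (d k : ℝ) (hd : d = 27 / 5) (hk : k = 27 / 5)
    (Φ : ℝ → ℝ)
    (hΦ : ∀ α, Φ α = D (1 - deriv K α / k) +
      (d / k) * (K α + (1 - α) * deriv K α - 1)) :
    Φ 0 = 0 ∧ Φ 1 = 0 ∧ ∃ α ∈ Set.Ioo (0:ℝ) 1, 0 < Φ α := by
  have hKfun : K = fun x => (4 * x ^ 3 + x ^ 15) / 5 := funext hK
  have hderiv : ∀ α : ℝ, deriv K α = (12 * α ^ 2 + 15 * α ^ 14) / 5 := by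
    intro α
    rw [hKfun]
    have h1 : HasDerivAt (fun x : ℝ => (4 * x ^ 3 + x ^ 15) / 5)
        ((4 * (3 * α ^ 2) + 15 * α ^ 14) / 5) α := by
      have := (((hasDerivAt_pow 3 α).const_mul 4).add (hasDerivAt_pow 15 α)).div_const 5
      simpa using this
    rw [h1.deriv]; ring
  refine ⟨?_, ?_, ⟨7/10, by norm_num, ?_⟩⟩
  · rw [hΦ, hderiv, hD, hK, hd, hk]; norm_num
  · rw [hΦ, hderiv, hD, hK, hd, hk]; norm_num
  · rw [hΦ, hderiv, hD, hK, hd, hk]; norm_num
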